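/- For real Δ > 0, Γ ≥ 0, ξ > 0, and s = ⌊Γ/(Δξ)⌋, the approximation error |log₂(Δ+Γ) − (1/ln 2)(ln(Δ + Δsξ) + (Γ − sΔξ)/(Δ(1+sξ)))| is at most (1/ln 2)·ξ²/2, i.e., the linearization of the logarithm at Δ(1+sξ) has error bounded by ξ²/(2 ln 2). -/

import Mathlib

open Real

lemma log_one_add_ge (u : ℝ) (hu : 0 ≤ u) : u - u ^ 2 / 2 ≤ Real.log (1 + u) := by
  have key : MonotoneOn (fun x : ℝ => Real.log (1 + x) - x + x ^ 2 / 2) (Set.Ici 0) := by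
    apply monotoneOn_of_deriv_nonneg (convex_Ici 0)
    · apply ContinuousOn.add
      · apply ContinuousOn.sub
        · apply ContinuousOn.log (by fun_prop)
          intro x hx
          simp only [Set.mem_Ici] at hx
          linarith
        · fun_prop
      · fun_prop
    · intro x hx
      simp only [interior_Ici, Set.mem_Ioi] at hx
      have h1x : (1:ℝ) + x ≠ 0 := by linarith
      have h1 : HasDerivAt (fun y : ℝ => Real.log (1 + y)) (1 / (1 + x)) x := by
        have := (Real.hasDerivAt_log h1x).comp x ((hasDerivAt_id x).const_add 1)
        simpa [Function.comp_def] using this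
      have h2 : HasDerivAt (fun y : ℝ => Real.log (1 + y) - y + y ^ 2 / 2)
          (1 / (1 + x) - 1 + 2 * x ^ 1 / 2) x :=
        (h1.sub (hasDerivAt_id x)).add ((hasDerivAt_pow 2 x).div_const 2)
      exact h2.differentiableAt.differentiableWithinAt
    · intro x hx
      simp only [interior_Ici, Set.mem_Ioi] at hx
      have h1x : (1:ℝ) + x ≠ 0 := by linarith
      have h1 : HasDerivAt (fun y : ℝ => Real.log (1 + y)) (1 / (1 + x)) x := by
        have := (Real.hasDerivAt_log h1x).comp x ((hasDerivAt_id x).const_add 1)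
        simpa [Function.comp_def] using this
      have h2 : HasDerivAt (fun y : ℝ => Real.log (1 + y) - y + y ^ 2 / 2)
          (1 / (1 + x) - 1 + 2 * x ^ 1 / 2) x :=
        (h1.sub (hasDerivAt_id x)).add ((hasDerivAt_pow 2 x).div_const 2)
      rw [h2.deriv]
      have heq : 1 / (1 + x) - 1 + 2 * x ^ 1 / 2 = x ^ 2 / (1 + x) := by
        field_simp
        ring
      rw [heq]
      positivity
  have h0 : (fun x : ℝ => Real.log (1 + x) - x + x ^ 2 / 2) 0 ≤
      (fun x : ℝ => Real.log (1 + x) - x + x ^ 2 / 2) u :=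
    key (Set.mem_Ici.2 le_rfl) (Set.mem_Ici.2 hu) hu
  simp only [add_zero, Real.log_one] at h0
  linarith

lemma abs_log_one_add_sub (u : ℝ) (hu : 0 ≤ u) : |Real.log (1 + u) - u| ≤ u ^ 2 / 2 := by
  rw [abs_le]
  constructor
  · have := log_one_add_ge u hu
    linarith
  · have := Real.log_le_sub_one_of_pos (show (0:ℝ) < 1 + u by linarith)
    nlinarith [sq_nonneg u]

theorem stmt_2 (Δ Γ ξ : ℝ) (hΔ : 0 < Δ) (hΓ : 0 ≤ Γ) (hξ : 0 < ξ)
    (s : ℤ) (hs : s = ⌊Γ / (Δ * ξ)⌋) :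
    |logb 2 (Δ + Γ) -
      (1 / Real.log 2) * (Real.log (Δ + Δ * s * ξ) + (Γ - s * Δ * ξ) / (Δ * (1 + s * ξ)))| ≤
      (1 / Real.log 2) * ξ ^ 2 / 2 := by
  have hΔξ : 0 < Δ * ξ := mul_pos hΔ hξ
  have hs0 : (0:ℤ) ≤ s := hs ▸ Int.floor_nonneg.2 (div_nonneg hΓ hΔξ.le)
  have hsR : (0:ℝ) ≤ (s:ℝ) := by exact_mod_cast hs0
  have h1 : (s:ℝ) * (Δ * ξ) ≤ Γ := by
    have := Int.floor_le (Γ / (Δ * ξ))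
    rw [← hs] at this
    calc (s:ℝ) * (Δ * ξ) ≤ (Γ / (Δ * ξ)) * (Δ * ξ) := by
          apply mul_le_mul_of_nonneg_right this hΔξ.le
      _ = Γ := by field_simp
  have h2 : Γ < ((s:ℝ) + 1) * (Δ * ξ) := by
    have := Int.lt_floor_add_one (Γ / (Δ * ξ))
    rw [← hs] at this
    calc Γ = (Γ / (Δ * ξ)) * (Δ * ξ) := by field_simp
      _ < ((s:ℝ) + 1) * (Δ * ξ) := by
          apply mul_lt_mul_of_pos_right (by exact_mod_cast this) hΔξ
  set a : ℝ := Δ * (1 + (s:ℝ) * ξ) with ha_def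
  have ha : 0 < a := by
    apply mul_pos hΔ
    nlinarith
  set r : ℝ := Γ - (s:ℝ) * Δ * ξ with hr_def
  have hr0 : 0 ≤ r := by
    have : (s:ℝ) * (Δ * ξ) = (s:ℝ) * Δ * ξ := by ring
    simp only [hr_def]; nlinarith
  have hr1 : r < Δ * ξ := by
    simp only [hr_def]; nlinarith
  set u : ℝ := r / a with hu_def
  have hu0 : 0 ≤ u := div_nonneg hr0 ha.le
  have huξ : u ≤ ξ := by
    rw [hu_def, div_le_iff₀ ha]
    have : Δ ≤ a := by
      rw [ha_def]; nlinarith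
    nlinarith
  have haΔ : Δ + Δ * (s:ℝ) * ξ = a := by rw [ha_def]; ring
  have hudef : (Γ - (s:ℝ) * Δ * ξ) / (Δ * (1 + (s:ℝ) * ξ)) = u := rfl
  have hsplit : Δ + Γ = a * (1 + u) := by
    have : a * (1 + u) = a + r := by
      rw [hu_def]
      field_simp
    rw [this, ha_def, hr_def]
    ring
  have hlog : Real.log (Δ + Γ) = Real.log a + Real.log (1 + u) := by
    rw [hsplit, Real.log_mul (ne_of_gt ha) (by positivity)]
  have hlog2 : 0 < Real.log 2 := Real.log_pos (by norm_num)
  rw [Real.logb, haΔ, hlog]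
  have hrw : (Real.log a + Real.log (1 + u)) / Real.log 2 -
      1 / Real.log 2 * (Real.log a + u) =
      1 / Real.log 2 * (Real.log (1 + u) - u) := by
    field_simp
    ring
  rw [hrw, abs_mul, abs_of_pos (by positivity : (0:ℝ) < 1 / Real.log 2)]
  have hb := abs_log_one_add_sub u hu0
  have hu2 : u ^ 2 / 2 ≤ ξ ^ 2 / 2 := by nlinarith
  calc 1 / Real.log 2 * |Real.log (1 + u) - u|
      ≤ 1 / Real.log 2 * (ξ ^ 2 / 2) := by
        apply mul_le_mul_of_nonneg_left (le_trans hb hu2) (by positivity)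
    _ = 1 / Real.log 2 * ξ ^ 2 / 2 := by ring
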